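/- Let A be a Sidon space of dimension n in an extension of F with basis (a_1, …, a_n), and let Φ: 𝒬_n → A² be the F-linear map on quadratic forms sending x_i x_j ↦ a_i a_j. Then A is a Sidon space if and only if every nonzero Q ∈ ker Φ has weight at least 3, where the weight of Q is the minimal k such that Q is a sum of k products of two linear forms. -/

import Mathlib

open Module Submodule

/-- The weight of a quadratic form (homogeneous degree-2 polynomial): the least `k`
such that it is a sum of `k` products of two linear forms. -/
noncomputable def wt {F : Type*} [Field F] {n : ℕ} (Q : MvPolynomial (Fin n) F) : ℕ :=
  sInf {k | ∃ l l' : Fin k → MvPolynomial (Fin n) F,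
    (∀ i, (l i).IsHomogeneous 1 ∧ (l' i).IsHomogeneous 1) ∧ Q = ∑ i, l i * l' i}

namespace Stmt14Aux

open MvPolynomial

variable {F : Type*} [Field F] {n : ℕ}

lemma degree_sum_eq (d : Fin n →₀ ℕ) : d.degree = d.sum fun _ e => e := rfl

lemma degree_add (u v : Fin n →₀ ℕ) : (u + v).degree = u.degree + v.degree := by
  rw [Finsupp.degree_eq_weight_one]
  exact map_add _ u v

lemma isHom_degree {φ : MvPolynomial (Fin n) F} {m : ℕ} (h : φ.IsHomogeneous m)
    {d : Fin n →₀ ℕ} (hc : coeff d φ ≠ 0) : d.degree = m := by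
  rw [Finsupp.degree_eq_weight_one]
  exact h hc

lemma exists_single_of_degree_one {d : Fin n →₀ ℕ} (h : d.degree = 1) :
    ∃ i, d = Finsupp.single i 1 := by
  classical
  have hd0 : d ≠ 0 := by rintro rfl; simp at h
  obtain ⟨i, hi⟩ := Finsupp.support_nonempty_iff.mpr hd0
  refine ⟨i, ?_⟩
  have h1 : 1 ≤ d i := Nat.one_le_iff_ne_zero.mpr (Finsupp.mem_support_iff.mp hi)
  have hle : d i ≤ 1 := by
    rw [← h]
    exact Finset.single_le_sum (f := fun j => d j) (fun _ _ => Nat.zero_le _) hi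
  ext j
  rcases eq_or_ne j i with rfl | hj
  · simp only [Finsupp.single_eq_same]; omega
  · rw [Finsupp.single_eq_of_ne' (Ne.symm hj)]
    by_contra hdj
    have hjmem : j ∈ d.support := Finsupp.mem_support_iff.mpr hdj
    have hsub : ({i, j} : Finset (Fin n)) ⊆ d.support := by
      intro k hk
      rcases Finset.mem_insert.mp hk with rfl | hk
      · exact hi
      · rw [Finset.mem_singleton.mp hk]; exact hjmem
    have hsum : d i + d j ≤ 1 := by
      rw [← h]
      calc d i + d j = ∑ k ∈ ({i, j} : Finset (Fin n)), d k :=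
            (Finset.sum_pair (fun hij => hj (hij.symm))).symm
        _ ≤ ∑ k ∈ d.support, d k := Finset.sum_le_sum_of_subset hsub
    omega

lemma exists_pair_of_degree_two {d : Fin n →₀ ℕ} (h : d.degree = 2) :
    ∃ ij : Fin n × Fin n, d = Finsupp.single ij.1 1 + Finsupp.single ij.2 1 := by
  classical
  have hd0 : d ≠ 0 := by rintro rfl; simp at h
  obtain ⟨i, hi⟩ := Finsupp.support_nonempty_iff.mpr hd0
  have h1 : 1 ≤ d i := Nat.one_le_iff_ne_zero.mpr (Finsupp.mem_support_iff.mp hi)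
  have hle : d i ≤ 2 := by
    rw [← h]
    exact Finset.single_le_sum (f := fun j => d j) (fun _ _ => Nat.zero_le _) hi
  by_cases hcase : ∃ j, j ≠ i ∧ d j ≠ 0
  · obtain ⟨j, hji, hdj⟩ := hcase
    refine ⟨(i, j), ?_⟩
    have hjmem : j ∈ d.support := Finsupp.mem_support_iff.mpr hdj
    have hsub : ({i, j} : Finset (Fin n)) ⊆ d.support := by
      intro k hk
      rcases Finset.mem_insert.mp hk with rfl | hk
      · exact hi
      · rw [Finset.mem_singleton.mp hk]; exact hjmem
    have hsum2 : d i + d j ≤ 2 := by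
      rw [← h]
      calc d i + d j = ∑ k ∈ ({i, j} : Finset (Fin n)), d k :=
            (Finset.sum_pair (Ne.symm hji)).symm
        _ ≤ ∑ k ∈ d.support, d k := Finset.sum_le_sum_of_subset hsub
    have hdj1 : 1 ≤ d j := Nat.one_le_iff_ne_zero.mpr hdj
    have hdi1 : d i = 1 := by omega
    have hdj1' : d j = 1 := by omega
    ext k
    simp only [Finsupp.coe_add, Pi.add_apply, Finsupp.single_apply]
    rcases eq_or_ne i k with rfl | hki
    · rw [if_pos rfl, if_neg (fun hh => hji hh)]; omega
    · rcases eq_or_ne j k with rfl | hkj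
      · rw [if_pos rfl, if_neg hki]; omega
      · rw [if_neg hki, if_neg hkj]
        by_contra hdk
        have hkmem : k ∈ d.support := Finsupp.mem_support_iff.mpr (by omega)
        have hsub3 : ({i, j, k} : Finset (Fin n)) ⊆ d.support := by
          intro m hm
          rcases Finset.mem_insert.mp hm with rfl | hm
          · exact hi
          rcases Finset.mem_insert.mp hm with rfl | hm
          · exact hjmem
          · rw [Finset.mem_singleton.mp hm]; exact hkmem
        have hsum3 : d i + (d j + d k) ≤ 2 := by
          rw [← h]
          have hcard : ∑ m ∈ ({i, j, k} : Finset (Fin n)), d m = d i + (d j + d k) := by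
            rw [Finset.sum_insert (by simp [Ne.symm hji, hki]),
              Finset.sum_pair (fun hh => hkj hh)]
          calc d i + (d j + d k) = ∑ m ∈ ({i, j, k} : Finset (Fin n)), d m := hcard.symm
            _ ≤ ∑ m ∈ d.support, d m := Finset.sum_le_sum_of_subset hsub3
        omega
  · push_neg at hcase
    have hdi2 : d i = 2 := by
      have : ∑ k ∈ d.support, d k = d i := by
        rw [Finset.sum_eq_single i]
        · intro b hb hbi
          exact hcase b hbi
        · intro hii; exact absurd hi hii
      have h' : (∑ k ∈ d.support, d k) = 2 := h
      omega
    refine ⟨(i, i), ?_⟩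
    ext k
    simp only [Finsupp.coe_add, Pi.add_apply, Finsupp.single_apply]
    rcases eq_or_ne i k with rfl | hki
    · rw [if_pos rfl]; omega
    · rw [if_neg hki, hcase k (fun hh => hki hh.symm)]
      simp


noncomputable def lin (c : Fin n → F) : MvPolynomial (Fin n) F := ∑ i, C (c i) * X i

lemma lin_isHomogeneous (c : Fin n → F) : (lin c).IsHomogeneous 1 :=
  IsHomogeneous.sum _ _ _ (fun i _ => isHomogeneous_C_mul_X (c i) i)

lemma coeff_lin (c : Fin n → F) (j : Fin n) :
    coeff (Finsupp.single j 1) (lin c) = c j := by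
  classical
  rw [lin, coeff_sum]
  rw [Finset.sum_eq_single j]
  · rw [coeff_C_mul, coeff_X]; simp
  · intro i _ hij
    rw [coeff_C_mul, coeff_X', if_neg, mul_zero]
    intro hh
    exact hij ((Finsupp.single_left_inj one_ne_zero).mp hh)
  · intro hj; exact absurd (Finset.mem_univ j) hj

lemma lin_inj {c c' : Fin n → F} (h : lin c = lin c') : c = c' := by
  funext i
  rw [← coeff_lin c i, ← coeff_lin c' i, h]

lemma eq_lin_of_isHomogeneous {l : MvPolynomial (Fin n) F} (hl : l.IsHomogeneous 1) :
    l = lin (fun i => coeff (Finsupp.single i 1) l) := by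
  apply MvPolynomial.ext
  intro d
  rcases eq_or_ne d.degree 1 with h1 | h1
  · obtain ⟨i, rfl⟩ := exists_single_of_degree_one h1
    rw [coeff_lin]
  · rw [hl.coeff_eq_zero h1,
      (lin_isHomogeneous (F := F) (fun i => coeff (Finsupp.single i 1) l)).coeff_eq_zero h1]

lemma lin_smul (k : F) (c : Fin n → F) : lin (fun i => k * c i) = C k * lin c := by
  rw [lin, lin, Finset.mul_sum]
  apply Finset.sum_congr rfl
  intro i _
  rw [← mul_assoc, ← C_mul]

section aevalL

variable {L : Type*} [Field L] [Algebra F L] {a : Fin n → L}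

lemma aeval_lin (c : Fin n → F) : MvPolynomial.aeval a (lin c) = ∑ i, c i • a i := by
  rw [lin, map_sum]
  apply Finset.sum_congr rfl
  intro i _
  rw [map_mul, aeval_C, aeval_X, Algebra.smul_def]

lemma aeval_homog1_eq_zero (ha : LinearIndependent F a)
    {l : MvPolynomial (Fin n) F} (hl : l.IsHomogeneous 1)
    (h : MvPolynomial.aeval a l = 0) : l = 0 := by
  rw [eq_lin_of_isHomogeneous hl] at h ⊢
  rw [aeval_lin] at h
  have := Fintype.linearIndependent_iff.mp ha _ h
  have hz : (fun i => coeff (Finsupp.single i 1) l) = fun _ => (0 : F) := funext this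
  rw [hz]
  rw [lin]
  simp

lemma aeval_homog1_mem {A : Submodule F L} (haA : ∀ i, a i ∈ A)
    {l : MvPolynomial (Fin n) F} (hl : l.IsHomogeneous 1) :
    MvPolynomial.aeval a l ∈ A := by
  rw [eq_lin_of_isHomogeneous hl, aeval_lin]
  exact Submodule.sum_mem _ fun i _ => Submodule.smul_mem _ _ (haA i)

end aevalL


lemma td_mul_eq {p q : MvPolynomial (Fin n) F} (hp : p ≠ 0) (hq : q ≠ 0) :
    (p * q).totalDegree = p.totalDegree + q.totalDegree := by
  classical
  refine le_antisymm (totalDegree_mul p q) ?_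
  set dp := p.totalDegree with hdp
  set dq := q.totalDegree with hdq
  set cp := homogeneousComponent dp p with hcp_def
  set cq := homogeneousComponent dq q with hcq_def
  have hcp0 : cp ≠ 0 := by
    obtain ⟨d, hd, hdeg⟩ := Finset.exists_mem_eq_sup p.support
      (support_nonempty.mpr hp) (fun s => s.sum fun _ e => e)
    intro h0
    have hdd : d.degree = dp := by rw [degree_sum_eq, hdp, MvPolynomial.totalDegree, hdeg]
    have : coeff d cp = coeff d p := by
      rw [hcp_def, coeff_homogeneousComponent, if_pos hdd]
    rw [h0, coeff_zero] at this
    exact (mem_support_iff.mp hd) this.symm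
  have hcq0 : cq ≠ 0 := by
    obtain ⟨d, hd, hdeg⟩ := Finset.exists_mem_eq_sup q.support
      (support_nonempty.mpr hq) (fun s => s.sum fun _ e => e)
    intro h0
    have hdd : d.degree = dq := by rw [degree_sum_eq, hdq, MvPolynomial.totalDegree, hdeg]
    have : coeff d cq = coeff d q := by
      rw [hcq_def, coeff_homogeneousComponent, if_pos hdd]
    rw [h0, coeff_zero] at this
    exact (mem_support_iff.mp hd) this.symm
  have hne : cp * cq ≠ 0 := mul_ne_zero hcp0 hcq0
  obtain ⟨d, hd⟩ := support_nonempty.mpr hne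
  have hhom : (cp * cq).IsHomogeneous (dp + dq) :=
    (homogeneousComponent_isHomogeneous dp p).mul (homogeneousComponent_isHomogeneous dq q)
  have hdeg : d.degree = dp + dq := isHom_degree hhom (mem_support_iff.mp hd)
  have hcoeff : coeff d (p * q) = coeff d (cp * cq) := by
    rw [coeff_mul, coeff_mul]
    apply Finset.sum_congr rfl
    rintro ⟨u, v⟩ huv
    have huv' : u + v = d := Finset.HasAntidiagonal.mem_antidiagonal.mp huv
    have hdeg' : u.degree + v.degree = dp + dq := by rw [← degree_add, huv', hdeg]
    rcases lt_trichotomy u.degree dp with hlt | heq | hgt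
    · have hv : dq < v.degree := by omega
      have h1 : coeff v q = 0 :=
        coeff_eq_zero_of_totalDegree_lt (show q.totalDegree < ∑ i ∈ v.support, v i from hv)
      have h2 : coeff v cq = 0 := by
        rw [hcq_def, coeff_homogeneousComponent, if_neg (by omega)]
      rw [h1, h2, mul_zero, mul_zero]
    · have hv : v.degree = dq := by omega
      rw [hcp_def, hcq_def, coeff_homogeneousComponent, coeff_homogeneousComponent,
        if_pos heq, if_pos hv]
    · have h1 : coeff u p = 0 :=
        coeff_eq_zero_of_totalDegree_lt (show p.totalDegree < ∑ i ∈ u.support, u i from hgt)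
      have h2 : coeff u cp = 0 := by
        rw [hcp_def, coeff_homogeneousComponent, if_neg (by omega)]
      rw [h1, h2, zero_mul, zero_mul]
  have hmem : d ∈ (p * q).support :=
    mem_support_iff.mpr (by rw [hcoeff]; exact mem_support_iff.mp hd)
  have hle := le_totalDegree hmem
  have : d.degree ≤ (p * q).totalDegree := hle
  omega

lemma eq_C_of_td_zero {t : MvPolynomial (Fin n) F} (h : t.totalDegree = 0) :
    t = C (coeff 0 t) := by
  apply MvPolynomial.ext
  intro d
  rcases eq_or_ne d 0 with rfl | hd
  · rw [coeff_C, if_pos rfl]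
  · rw [coeff_C, if_neg (Ne.symm hd)]
    by_contra hc
    obtain ⟨x, hx⟩ := Finsupp.ne_iff.mp hd
    have := (totalDegree_eq_zero_iff (Fin n) t).mp h d (mem_support_iff.mpr hc) x
    simp only [Finsupp.coe_zero, Pi.zero_apply] at hx
    exact hx this

lemma irreducible_of_homog1 {p : MvPolynomial (Fin n) F} (hp : p.IsHomogeneous 1)
    (hp0 : p ≠ 0) : Irreducible p := by
  have htd : p.totalDegree = 1 := hp.totalDegree hp0
  constructor
  · intro hu
    obtain ⟨q, hq⟩ := isUnit_iff_exists_inv.mp hu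
    have hq0 : q ≠ 0 := by rintro rfl; rw [mul_zero] at hq; exact zero_ne_one hq
    have h1 := td_mul_eq hp0 hq0
    rw [hq, totalDegree_one, htd] at h1
    omega
  · intro q r hqr
    have hq0 : q ≠ 0 := by rintro rfl; rw [zero_mul] at hqr; exact hp0 hqr
    have hr0 : r ≠ 0 := by rintro rfl; rw [mul_zero] at hqr; exact hp0 hqr
    have h1 : q.totalDegree + r.totalDegree = 1 := by
      rw [← td_mul_eq hq0 hr0, ← hqr, htd]
    rcases Nat.eq_zero_or_pos q.totalDegree with h0 | h0
    · left
      rw [eq_C_of_td_zero h0]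
      refine (isUnit_iff_ne_zero.mpr ?_).map (C : F →+* MvPolynomial (Fin n) F)
      intro hc
      rw [eq_C_of_td_zero h0, hc, map_zero] at hq0
      exact hq0 rfl
    · right
      have hr : r.totalDegree = 0 := by omega
      rw [eq_C_of_td_zero hr]
      refine (isUnit_iff_ne_zero.mpr ?_).map (C : F →+* MvPolynomial (Fin n) F)
      intro hc
      rw [eq_C_of_td_zero hr, hc, map_zero] at hr0
      exact hr0 rfl

lemma dvd_linear {p t : MvPolynomial (Fin n) F} (hp : p.IsHomogeneous 1) (hp0 : p ≠ 0)
    {q : MvPolynomial (Fin n) F} (hq : q.IsHomogeneous 1) (hq0 : q ≠ 0)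
    (h : q = p * t) : ∃ k : F, q = C k * p := by
  have ht0 : t ≠ 0 := by rintro rfl; rw [mul_zero] at h; exact hq0 h
  have h1 : t.totalDegree = 0 := by
    have := td_mul_eq hp0 ht0
    rw [← h, hq.totalDegree hq0, hp.totalDegree hp0] at this
    omega
  refine ⟨coeff 0 t, ?_⟩
  conv_lhs => rw [h, eq_C_of_td_zero h1]
  rw [mul_comm]


lemma C_mul_X_mul_X (c : F) (a b : Fin n) :
    (C c * X a) * X b = monomial (Finsupp.single a 1 + Finsupp.single b 1) c := by
  have hb : (X b : MvPolynomial (Fin n) F) = monomial (Finsupp.single b 1) 1 := by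
    rw [← C_mul_X_eq_monomial, map_one, one_mul]
  rw [C_mul_X_eq_monomial, hb, monomial_mul, mul_one]

lemma exists_rep_of_homog2 {Q : MvPolynomial (Fin n) F} (hQ : Q.IsHomogeneous 2) :
    ∃ k, ∃ l l' : Fin k → MvPolynomial (Fin n) F,
      (∀ i, (l i).IsHomogeneous 1 ∧ (l' i).IsHomogeneous 1) ∧ Q = ∑ i, l i * l' i := by
  classical
  have hpair : ∀ d : Fin n →₀ ℕ, d ∈ Q.support →
      ∃ ij : Fin n × Fin n, d = Finsupp.single ij.1 1 + Finsupp.single ij.2 1 :=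
    fun d hd => exists_pair_of_degree_two (isHom_degree hQ (mem_support_iff.mp hd))
  set k := Fintype.card {x // x ∈ Q.support} with hk
  set e : Fin k ≃ {x // x ∈ Q.support} := (Fintype.equivFin _).symm with he
  refine ⟨k,
    fun i => C (coeff ((e i : Fin n →₀ ℕ)) Q) * X (hpair _ (e i).2).choose.1,
    fun i => X (hpair _ (e i).2).choose.2, fun i => ⟨isHomogeneous_C_mul_X _ _, isHomogeneous_X _ _⟩,
    ?_⟩
  have hterm : ∀ i : Fin k,
      (C (coeff ((e i : Fin n →₀ ℕ)) Q) * X (hpair _ (e i).2).choose.1) *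
        X (hpair _ (e i).2).choose.2
      = monomial ((e i : Fin n →₀ ℕ)) (coeff ((e i : Fin n →₀ ℕ)) Q) := by
    intro i
    rw [C_mul_X_mul_X, ← (hpair _ (e i).2).choose_spec]
  rw [Finset.sum_congr rfl (fun i _ => hterm i)]
  rw [Equiv.sum_comp e (fun x : {x // x ∈ Q.support} =>
    monomial ((x : Fin n →₀ ℕ)) (coeff ((x : Fin n →₀ ℕ)) Q))]
  rw [Finset.sum_coe_sort Q.support (fun d => monomial d (coeff d Q))]
  exact (Q.support_sum_monomial_coeff).symm

lemma wt_le {Q : MvPolynomial (Fin n) F} {k : ℕ} (l l' : Fin k → MvPolynomial (Fin n) F)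
    (hl : ∀ i, (l i).IsHomogeneous 1 ∧ (l' i).IsHomogeneous 1) (hsum : Q = ∑ i, l i * l' i) :
    wt Q ≤ k :=
  Nat.sInf_le ⟨l, l', hl, hsum⟩

lemma wt_rep {Q : MvPolynomial (Fin n) F} (hQ : Q.IsHomogeneous 2) :
    ∃ l l' : Fin (wt Q) → MvPolynomial (Fin n) F,
      (∀ i, (l i).IsHomogeneous 1 ∧ (l' i).IsHomogeneous 1) ∧ Q = ∑ i, l i * l' i := by
  have hne : {k | ∃ l l' : Fin k → MvPolynomial (Fin n) F,
      (∀ i, (l i).IsHomogeneous 1 ∧ (l' i).IsHomogeneous 1) ∧ Q = ∑ i, l i * l' i}.Nonempty := by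
    obtain ⟨k, l, l', h1, h2⟩ := exists_rep_of_homog2 hQ
    exact ⟨k, l, l', h1, h2⟩
  exact Nat.sInf_mem hne

lemma wt_rep' {Q : MvPolynomial (Fin n) F} (hQ : Q.IsHomogeneous 2) (hle : wt Q ≤ 2) :
    ∃ k, k ≤ 2 ∧ ∃ l l' : Fin k → MvPolynomial (Fin n) F,
      (∀ i, (l i).IsHomogeneous 1 ∧ (l' i).IsHomogeneous 1) ∧ Q = ∑ i, l i * l' i :=
  ⟨wt Q, hle, wt_rep hQ⟩


lemma main_forward {L : Type*} [Field L] [Algebra F L] {A : Submodule F L}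
    [FiniteDimensional F ↥A]
    {a : Fin n → L} (ha : LinearIndependent F a) (haA : ∀ i, a i ∈ A)
    (hS : ∀ x : L, x ∉ Set.range (algebraMap F L) →
        finrank F ↥(A ⊓ A.map (LinearMap.mulLeft F x)) ≤ 1)
    (p p' q q' : MvPolynomial (Fin n) F)
    (hp : p.IsHomogeneous 1) (hp' : p'.IsHomogeneous 1)
    (hq : q.IsHomogeneous 1) (hq' : q'.IsHomogeneous 1)
    (h0 : MvPolynomial.aeval a p * MvPolynomial.aeval a p'
        + MvPolynomial.aeval a q * MvPolynomial.aeval a q' = 0) :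
    p * p' + q * q' = 0 := by
  by_cases hu1 : MvPolynomial.aeval a p = 0
  · rw [aeval_homog1_eq_zero ha hp hu1, zero_mul, zero_add]
    rw [hu1, zero_mul, zero_add] at h0
    rcases mul_eq_zero.mp h0 with h | h
    · rw [aeval_homog1_eq_zero ha hq h, zero_mul]
    · rw [aeval_homog1_eq_zero ha hq' h, mul_zero]
  by_cases hv1 : MvPolynomial.aeval a p' = 0
  · rw [aeval_homog1_eq_zero ha hp' hv1, mul_zero, zero_add]
    rw [hv1, mul_zero, zero_add] at h0
    rcases mul_eq_zero.mp h0 with h | h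
    · rw [aeval_homog1_eq_zero ha hq h, zero_mul]
    · rw [aeval_homog1_eq_zero ha hq' h, mul_zero]
  by_cases hu2 : MvPolynomial.aeval a q = 0
  · rw [aeval_homog1_eq_zero ha hq hu2, zero_mul, add_zero]
    rw [hu2, zero_mul, add_zero] at h0
    rcases mul_eq_zero.mp h0 with h | h
    · rw [aeval_homog1_eq_zero ha hp h, zero_mul]
    · rw [aeval_homog1_eq_zero ha hp' h, mul_zero]
  by_cases hv2 : MvPolynomial.aeval a q' = 0
  · rw [aeval_homog1_eq_zero ha hq' hv2, mul_zero, add_zero]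
    rw [hv2, mul_zero, add_zero] at h0
    rcases mul_eq_zero.mp h0 with h | h
    · rw [aeval_homog1_eq_zero ha hp h, zero_mul]
    · rw [aeval_homog1_eq_zero ha hp' h, mul_zero]
  set u1 := MvPolynomial.aeval a p with hu1d
  set v1 := MvPolynomial.aeval a p' with hv1d
  set u2 := MvPolynomial.aeval a q with hu2d
  set v2 := MvPolynomial.aeval a q' with hv2d
  by_cases hx : u2 / u1 ∈ Set.range (algebraMap F L)
  · obtain ⟨c, hc⟩ := hx
    have hcu : u2 = algebraMap F L c * u1 := (div_eq_iff hu1).mp hc.symm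
    have hq2 : q = C c * p := by
      have hz : MvPolynomial.aeval a (q - C c * p) = 0 := by
        rw [map_sub, map_mul, aeval_C, ← hu2d, ← hu1d, hcu]; ring
      exact sub_eq_zero.mp (aeval_homog1_eq_zero ha (hq.sub (hp.C_mul c)) hz)
    have hv1e : v1 = -(algebraMap F L c * v2) := by
      have h2 : u1 * (v1 + algebraMap F L c * v2) = 0 := by
        rw [← h0, hcu]; ring
      rcases mul_eq_zero.mp h2 with h | h
      · exact absurd h hu1
      · exact eq_neg_of_add_eq_zero_left h
    have hp'2 : p' = -(C c * q') := by
      have hz : MvPolynomial.aeval a (p' + C c * q') = 0 := by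
        rw [map_add, map_mul, aeval_C, ← hv1d, ← hv2d, hv1e]; ring
      exact eq_neg_of_add_eq_zero_left (aeval_homog1_eq_zero ha (hp'.add (hq'.C_mul c)) hz)
    rw [hq2, hp'2]; ring
  · have hSx := hS _ hx
    set x := u2 / u1 with hxd
    set S := A ⊓ A.map (LinearMap.mulLeft F x) with hSdef
    haveI : FiniteDimensional F ↥S :=
      Submodule.finiteDimensional_of_le (inf_le_left : S ≤ A)
    have hu1A : u1 ∈ A := aeval_homog1_mem haA hp
    have hv1A : v1 ∈ A := aeval_homog1_mem haA hp'
    have hu2A : u2 ∈ A := aeval_homog1_mem haA hq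
    have hv2A : v2 ∈ A := aeval_homog1_mem haA hq'
    have hxu1 : x * u1 = u2 := div_mul_cancel₀ u2 hu1
    have hu2S : u2 ∈ S := by
      refine Submodule.mem_inf.mpr ⟨hu2A, Submodule.mem_map.mpr ⟨u1, hu1A, ?_⟩⟩
      simpa [LinearMap.mulLeft_apply] using hxu1
    have hxv2 : x * (-v2) = v1 := by
      rw [hxd, div_mul_eq_mul_div, div_eq_iff hu1]
      linear_combination -h0
    have hv1S : v1 ∈ S := by
      refine Submodule.mem_inf.mpr ⟨hv1A, Submodule.mem_map.mpr
        ⟨-v2, Submodule.neg_mem _ hv2A, ?_⟩⟩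
      simpa [LinearMap.mulLeft_apply] using hxv2
    haveI : Nontrivial ↥S := nontrivial_of_ne (⟨u2, hu2S⟩ : S) 0 (by
      intro hcon
      exact hu2 (congrArg Subtype.val hcon))
    have h1 : finrank F ↥S = 1 := le_antisymm hSx Module.finrank_pos
    obtain ⟨c, hc⟩ := (finrank_eq_one_iff_of_nonzero' (⟨u2, hu2S⟩ : S)
      (by intro hcon; exact hu2 (congrArg Subtype.val hcon))).mp h1 ⟨v1, hv1S⟩
    have hcL : algebraMap F L c * u2 = v1 := by
      have h2 := congrArg (fun y : S => (y : L)) hc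
      simpa [Algebra.smul_def] using h2
    have hp'2 : p' = C c * q := by
      have hz : MvPolynomial.aeval a (p' - C c * q) = 0 := by
        rw [map_sub, map_mul, aeval_C, ← hv1d, ← hu2d, ← hcL]; ring
      exact sub_eq_zero.mp (aeval_homog1_eq_zero ha (hp'.sub (hq.C_mul c)) hz)
    have hv2e : v2 = -(algebraMap F L c * u1) := by
      have h2 : u2 * (v2 + algebraMap F L c * u1) = 0 := by
        rw [← hcL] at h0
        linear_combination h0
      rcases mul_eq_zero.mp h2 with h | h
      · exact absurd h hu2
      · exact eq_neg_of_add_eq_zero_left h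
    have hq'2 : q' = -(C c * p) := by
      have hz : MvPolynomial.aeval a (q' + C c * p) = 0 := by
        rw [map_add, map_mul, aeval_C, ← hv2d, ← hu1d, hv2e]; ring
      exact eq_neg_of_add_eq_zero_left (aeval_homog1_eq_zero ha (hq'.add (hp.C_mul c)) hz)
    rw [hp'2, hq'2]; ring


end Stmt14Aux

open Stmt14Aux in
theorem stmt14 {F L : Type*} [Field F] [Field L] [Algebra F L]
    (A : Submodule F L) (n : ℕ) (a : Fin n → L)
    (hbasis : ∃ b : Basis (Fin n) F ↥A, ∀ i, (b i : L) = a i) :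
    (∀ x : L, x ∉ Set.range (algebraMap F L) →
        finrank F ↥(A ⊓ A.map (LinearMap.mulLeft F x)) ≤ 1) ↔
      (∀ Q : MvPolynomial (Fin n) F, Q.IsHomogeneous 2 →
        MvPolynomial.aeval a Q = 0 → Q ≠ 0 → 3 ≤ wt Q) := by
  classical
  open MvPolynomial in
  obtain ⟨b, hb⟩ := hbasis
  haveI : FiniteDimensional F ↥A := Module.Finite.of_basis b
  have ha : LinearIndependent F a := by
    have h1 := b.linearIndependent.map' A.subtype (Submodule.ker_subtype A)
    have h2 : a = (A.subtype ∘ b) := by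
      funext i
      simp [Function.comp, hb i]
    rw [h2]
    exact h1
  have haA : ∀ i, a i ∈ A := fun i => hb i ▸ (b i).2
  have hrep : ∀ w ∈ A, ∃ c : Fin n → F, w = ∑ i, c i • a i := by
    intro w hw
    refine ⟨fun i => b.repr ⟨w, hw⟩ i, ?_⟩
    have h1 := b.sum_repr ⟨w, hw⟩
    have h2 := congrArg (Subtype.val) h1
    rw [AddSubmonoidClass.coe_finset_sum] at h2
    simp only [SetLike.val_smul, hb] at h2
    exact h2.symm
  constructor
  · intro hS Q hQ2 h0 hQne
    by_contra hlt
    push_neg at hlt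
    obtain ⟨k, hk2, l, l', hl, hsum⟩ := wt_rep' hQ2 (by omega)
    interval_cases k
    · exact hQne (by simpa using hsum)
    · rw [Fin.sum_univ_one] at hsum
      have h00 : MvPolynomial.aeval a (l 0) * MvPolynomial.aeval a (l' 0)
          + MvPolynomial.aeval a (0 : MvPolynomial (Fin n) F)
            * MvPolynomial.aeval a (0 : MvPolynomial (Fin n) F) = 0 := by
        rw [map_zero, mul_zero, add_zero, ← map_mul, ← hsum, h0]
      have hz := main_forward ha haA hS (l 0) (l' 0) 0 0 (hl 0).1 (hl 0).2
        (isHomogeneous_zero _ _ _) (isHomogeneous_zero _ _ _) h00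
      apply hQne
      rw [hsum]
      simpa using hz
    · rw [Fin.sum_univ_two] at hsum
      have h00 : MvPolynomial.aeval a (l 0) * MvPolynomial.aeval a (l' 0)
          + MvPolynomial.aeval a (l 1) * MvPolynomial.aeval a (l' 1) = 0 := by
        rw [← map_mul, ← map_mul, ← map_add, ← hsum, h0]
      have hz := main_forward ha haA hS (l 0) (l' 0) (l 1) (l' 1) (hl 0).1 (hl 0).2
        (hl 1).1 (hl 1).2 h00
      exact hQne (hsum.trans hz)
  · intro hW x hx
    set S := A ⊓ A.map (LinearMap.mulLeft F x) with hSdef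
    haveI : FiniteDimensional F ↥S :=
      Submodule.finiteDimensional_of_le (inf_le_left : S ≤ A)
    by_cases htriv : ∀ w : S, w = 0
    · exact finrank_le_one 0 (fun w => ⟨0, by rw [htriv w]; simp⟩)
    push_neg at htriv
    obtain ⟨v, hv⟩ := htriv
    apply finrank_le_one v
    intro w
    by_contra hw
    push_neg at hw
    have hw0 : w ≠ 0 := by
      intro hcon
      exact hw 0 (by rw [hcon, zero_smul])
    -- unpack memberships
    have hv0 : (v : L) ≠ 0 := fun hcon => hv (Subtype.ext hcon)
    have hw0' : (w : L) ≠ 0 := fun hcon => hw0 (Subtype.ext hcon)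
    obtain ⟨hwA, hwmap⟩ := Submodule.mem_inf.mp w.2
    obtain ⟨hvA, hvmap⟩ := Submodule.mem_inf.mp v.2
    obtain ⟨zw, hzwA, hzw⟩ := Submodule.mem_map.mp hwmap
    obtain ⟨zv, hzvA, hzv⟩ := Submodule.mem_map.mp hvmap
    rw [LinearMap.mulLeft_apply] at hzw hzv
    have hzw0 : zw ≠ 0 := by
      intro hcon
      rw [hcon, mul_zero] at hzw
      exact hw0' hzw.symm
    have hzv0 : zv ≠ 0 := by
      intro hcon
      rw [hcon, mul_zero] at hzv
      exact hv0 hzv.symm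
    obtain ⟨cw, hcw⟩ := hrep _ hwA
    obtain ⟨cv, hcv⟩ := hrep _ hvA
    obtain ⟨dw, hdw⟩ := hrep _ hzwA
    obtain ⟨dv, hdv⟩ := hrep _ hzvA
    set Q := lin cw * lin dv - lin cv * lin dw with hQdef
    have haevalQ : MvPolynomial.aeval a Q = 0 := by
      rw [hQdef, map_sub, map_mul, map_mul, aeval_lin, aeval_lin, aeval_lin, aeval_lin,
        ← hcw, ← hcv, ← hdw, ← hdv, ← hzw, ← hzv]
      ring
    have hQhom : Q.IsHomogeneous 2 :=
      ((lin_isHomogeneous cw).mul (lin_isHomogeneous dv)).sub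
        ((lin_isHomogeneous cv).mul (lin_isHomogeneous dw))
    have hwtle : wt Q ≤ 2 := by
      refine wt_le ![lin cw, -(lin cv)] ![lin dv, lin dw] ?_ ?_
      · intro i
        fin_cases i
        · exact ⟨lin_isHomogeneous cw, lin_isHomogeneous dv⟩
        · exact ⟨(lin_isHomogeneous cv).neg, lin_isHomogeneous dw⟩
      · rw [Fin.sum_univ_two]
        simp only [Matrix.cons_val_zero, Matrix.cons_val_one, Matrix.head_cons]
        rw [hQdef]
        ring
    by_cases hQ0 : Q = 0
    · -- factorization case
      have heq : lin cw * lin dv = lin cv * lin dw := sub_eq_zero.mp hQ0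
      have hlincv : lin cv ≠ 0 := by
        intro hcon
        apply hv0
        rw [hcv]
        have : cv = fun _ => (0 : F) := lin_inj (by rw [hcon, lin]; simp)
        rw [this]
        simp
      have hlincw : lin cw ≠ 0 := by
        intro hcon
        apply hw0'
        rw [hcw]
        have : cw = fun _ => (0 : F) := lin_inj (by rw [hcon, lin]; simp)
        rw [this]
        simp
      have hlindv : lin dv ≠ 0 := by
        intro hcon
        apply hzv0
        rw [hdv]
        have : dv = fun _ => (0 : F) := lin_inj (by rw [hcon, lin]; simp)
        rw [this]
        simp
      have hprime : Prime (lin cv) :=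
        UniqueFactorizationMonoid.irreducible_iff_prime.mp
          (irreducible_of_homog1 (lin_isHomogeneous cv) hlincv)
      have hdvd : lin cv ∣ lin cw * lin dv := ⟨lin dw, heq⟩
      rcases hprime.2.2 _ _ hdvd with hdvd1 | hdvd2
      · obtain ⟨t, ht⟩ := hdvd1
        obtain ⟨kk, hkk⟩ := dvd_linear (lin_isHomogeneous cv) hlincv
          (lin_isHomogeneous cw) hlincw ht
        have hcweq : cw = fun i => kk * cv i := lin_inj (by rw [hkk, ← lin_smul])
        apply hw <| kk
        apply Subtype.ext
        rw [Submodule.coe_smul]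
        rw [hcw, hcv, hcweq, Finset.smul_sum]
        apply Finset.sum_congr rfl
        intro i _
        rw [smul_smul]
      · obtain ⟨t, ht⟩ := hdvd2
        obtain ⟨kk, hkk⟩ := dvd_linear (lin_isHomogeneous cv) hlincv
          (lin_isHomogeneous dv) hlindv ht
        have hdveq : dv = fun i => kk * cv i := lin_inj (by rw [hkk, ← lin_smul])
        have hzveq : zv = kk • (v : L) := by
          rw [hdv, hcv, hdveq, Finset.smul_sum]
          apply Finset.sum_congr rfl
          intro i _
          rw [smul_smul]
        have hkk0 : kk ≠ 0 := by
          intro hcon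
          rw [hcon, zero_smul] at hzveq
          exact hzv0 hzveq
        apply hx
        refine ⟨kk⁻¹, ?_⟩
        have h2 : (v : L) = x * (kk • (v : L)) := by rw [← hzveq, hzv]
        rw [Algebra.smul_def] at h2
        have h3 : (v : L) * (1 - x * algebraMap F L kk) = 0 := by
          linear_combination h2
        have h4 : x * algebraMap F L kk = 1 := by
          rcases mul_eq_zero.mp h3 with h | h
          · exact absurd h hv0
          · linear_combination -h
        rw [map_inv₀]
        exact inv_eq_of_mul_eq_one_right (by linear_combination h4)
    · exact absurd (hW Q hQhom haevalQ hQ0) (by omega)
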